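/- Bounds for the convolution Υ ⋆ μ: for every integer n ≥ 2, |μ(n)|/n² ≤ (Υ ⋆ μ)(n) ≤ (1/F) · |μ(n)|/n². -/

import Mathlib

open Finset ArithmeticFunction

/-- The Feller–Tornier constant `F = ∏_{p prime} (1 − 2/p²)`. -/
noncomputable def fellerTornier : ℝ := ∏' p : Nat.Primes, (1 - 2 / ((p : ℕ) : ℝ) ^ 2)

/-- The arithmetic function `Υ`, with `Υ(1) = 1` and
`Υ(n) = ∏_{p ∣ n} (1 − 1/p²)/(1 − 2/p²)` for `n ≥ 2`. -/
noncomputable def Upsilon (n : ℕ) : ℝ :=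
  if n = 0 then 1 / ((Real.pi ^ 2 / 6) * fellerTornier)
  else ∏ p ∈ n.primeFactors, (1 - 1 / (p : ℝ) ^ 2) / (1 - 2 / (p : ℝ) ^ 2)

/-- The Dirichlet convolution `Υ ⋆ μ`. -/
noncomputable def UpsilonStarMu (n : ℕ) : ℝ :=
  ∑ d ∈ n.divisors, Upsilon d * (moebius (n / d) : ℝ)

/-! ### Auxiliary material -/

namespace UpsilonAux

/-- basic bound for primes -/
lemma half_le {p : ℕ} (hp : p.Prime) : (1:ℝ)/2 ≤ 1 - 2 / (p : ℝ) ^ 2 := by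
  have h2 : (2:ℝ) ≤ p := by exact_mod_cast hp.two_le
  have h4 : (4:ℝ) ≤ (p:ℝ)^2 := by nlinarith
  have hpos : (0:ℝ) < (p:ℝ)^2 := by nlinarith
  have : 2 / (p:ℝ)^2 ≤ 1/2 := by rw [div_le_div_iff₀ hpos (by norm_num)]; nlinarith
  linarith

lemma factor_pos {p : ℕ} (hp : p.Prime) : (0:ℝ) < 1 - 2 / (p : ℝ) ^ 2 := by
  have := half_le hp; linarith

lemma factor_le_one {p : ℕ} (hp : p.Prime) : 1 - 2 / (p : ℝ) ^ 2 ≤ 1 := by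
  have h2 : (2:ℝ) ≤ p := by exact_mod_cast hp.two_le
  have hpos : (0:ℝ) < (p:ℝ)^2 := by nlinarith
  have : (0:ℝ) ≤ 2 / (p:ℝ)^2 := by positivity
  linarith

/-- The log of the Euler factors, extended by zero. -/
noncomputable def L (n : ℕ) : ℝ :=
  if n.Prime then Real.log (1 - 2 / (n : ℝ) ^ 2) else 0

lemma L_nonpos (n : ℕ) : L n ≤ 0 := by
  unfold L
  split_ifs with h
  · exact Real.log_nonpos (le_of_lt (factor_pos h)) (factor_le_one h)
  · exact le_rfl

lemma neg_L_le (n : ℕ) : -L n ≤ 4 * (1 / (n : ℝ)^2) := by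
  unfold L
  split_ifs with h
  · set x : ℝ := 2 / (n:ℝ)^2 with hx
    have h2 : (2:ℝ) ≤ n := by exact_mod_cast h.two_le
    have hpos : (0:ℝ) < (n:ℝ)^2 := by nlinarith
    have hx0 : 0 < x := by positivity
    have hxh : x ≤ 1/2 := by
      rw [hx, div_le_div_iff₀ hpos (by norm_num)]; nlinarith
    have h1x : (0:ℝ) < 1 - x := by linarith
    have hlog : Real.log ((1 - x)⁻¹) ≤ (1 - x)⁻¹ - 1 :=
      Real.log_le_sub_one_of_pos (by positivity)
    have hinv : (1 - x)⁻¹ ≤ 1 + 2 * x := by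
      rw [inv_le_iff_one_le_mul₀ h1x]; nlinarith
    have : -Real.log (1 - x) ≤ 2 * x := by
      rw [← Real.log_inv]; linarith
    have hxval : 2 * x = 4 * (1 / (n:ℝ)^2) := by rw [hx]; ring
    linarith
  · have : (0:ℝ) ≤ 4 * (1 / (n : ℝ)^2) := by positivity
    simpa using this

lemma summable_L : Summable L := by
  rw [← summable_neg_iff]
  apply Summable.of_nonneg_of_le (fun n => by simpa using L_nonpos n) (fun n => neg_L_le n)
  exact (Real.summable_one_div_nat_pow.mpr (by norm_num)).mul_left 4

lemma summable_primes :
    Summable (fun p : Nat.Primes => Real.log (1 - 2 / ((p : ℕ) : ℝ) ^ 2)) := by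
  have h := summable_L.subtype {n : ℕ | n.Prime}
  exact h.congr (fun p => by
    simp only [Function.comp_apply, L, if_pos (show (p.1).Prime from p.2)])

lemma tsum_primes_eq : (∑' p : Nat.Primes, Real.log (1 - 2 / ((p : ℕ) : ℝ) ^ 2)) = ∑' n, L n := by
  have : (∑' p : Nat.Primes, Real.log (1 - 2 / ((p : ℕ) : ℝ) ^ 2))
      = ∑' p : {n : ℕ | n.Prime}, Real.log (1 - 2 / ((p : ℕ) : ℝ) ^ 2) := rfl
  rw [this]
  exact (_root_.tsum_subtype {n : ℕ | n.Prime}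
      (fun n => Real.log (1 - 2 / (n : ℝ) ^ 2))).trans
    (tsum_congr fun n => by simp [L, Set.indicator_apply, Set.mem_setOf_eq])

lemma fellerTornier_eq : fellerTornier = Real.exp (∑' n, L n) := by
  have h := Real.rexp_tsum_eq_tprod (ι := Nat.Primes)
      (f := fun p => 1 - 2 / ((p : ℕ) : ℝ) ^ 2)
      (fun p => factor_pos p.2) summable_primes
  have h2 : Real.exp (∑' p : Nat.Primes, Real.log (1 - 2 / ((p : ℕ) : ℝ) ^ 2))
      = ∏' p : Nat.Primes, (1 - 2 / ((p : ℕ) : ℝ) ^ 2) := h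
  rw [fellerTornier, ← h2, tsum_primes_eq]

lemma fellerTornier_pos : 0 < fellerTornier := by
  rw [fellerTornier_eq]; exact Real.exp_pos _

lemma fellerTornier_le_prod (S : Finset ℕ) (hS : ∀ p ∈ S, p.Prime) :
    fellerTornier ≤ ∏ p ∈ S, (1 - 2 / (p : ℝ) ^ 2) := by
  have hsum : (∑' n, L n) ≤ ∑ p ∈ S, L p := by
    have h := Summable.sum_le_tsum S (f := fun n => -L n)
      (fun i _ => by simpa using L_nonpos i) summable_L.neg
    rw [tsum_neg] at h
    have : ∑ p ∈ S, -L p = -∑ p ∈ S, L p := by simp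
    rw [this] at h
    linarith
  calc fellerTornier = Real.exp (∑' n, L n) := fellerTornier_eq
    _ ≤ Real.exp (∑ p ∈ S, L p) := Real.exp_le_exp.mpr hsum
    _ = ∏ p ∈ S, Real.exp (L p) := Real.exp_sum S L
    _ = ∏ p ∈ S, (1 - 2 / (p : ℝ) ^ 2) := by
        refine Finset.prod_congr rfl fun p hp => ?_
        rw [L, if_pos (hS p hp), Real.exp_log (factor_pos (hS p hp))]

/-! ### Arithmetic function computations -/

/-- the Euler factor of `Υ` -/
noncomputable def c (p : ℕ) : ℝ := (1 - 1 / (p : ℝ) ^ 2) / (1 - 2 / (p : ℝ) ^ 2)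

/-- `Υ` as an arithmetic function. -/
noncomputable def Uaf : ArithmeticFunction ℝ := prodPrimeFactors c

/-- `μ` as a real arithmetic function. -/
noncomputable def Maf : ArithmeticFunction ℝ := ((moebius : ArithmeticFunction ℤ) : ArithmeticFunction ℝ)

lemma Maf_apply (n : ℕ) : Maf n = ((moebius n : ℤ) : ℝ) := by
  simp [Maf]

lemma conv_eq {n : ℕ} (hn : n ≠ 0) : UpsilonStarMu n = (Uaf * Maf) n := by
  rw [UpsilonStarMu, mul_apply, Nat.sum_divisorsAntidiagonal (fun a b => Uaf a * Maf b)]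
  refine Finset.sum_congr rfl fun d hd => ?_
  have hd0 : d ≠ 0 := (Nat.pos_of_mem_divisors hd).ne'
  rw [Maf_apply, Uaf, prodPrimeFactors_apply hd0, Upsilon, if_neg hd0]
  rfl

lemma conv_mult : (Uaf * Maf).IsMultiplicative :=
  (ArithmeticFunction.IsMultiplicative.prodPrimeFactors c).mul
    isMultiplicative_moebius.intCast

lemma Uaf_pow {p k : ℕ} (hp : p.Prime) : Uaf (p ^ k) = if k = 0 then 1 else c p := by
  rcases Nat.eq_zero_or_pos k with rfl | hk
  · simp [Uaf]
  · rw [Uaf, prodPrimeFactors_apply (pow_ne_zero _ hp.pos.ne'), if_neg hk.ne',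
      Nat.primeFactors_pow _ hk.ne', hp.primeFactors, Finset.prod_singleton]

lemma Maf_pow {p k : ℕ} (hp : p.Prime) :
    Maf (p ^ k) = if k = 0 then 1 else if k = 1 then -1 else 0 := by
  rcases Nat.eq_zero_or_pos k with rfl | hk
  · simp [Maf_apply]
  · rw [Maf_apply, moebius_apply_prime_pow hp hk.ne', if_neg hk.ne']
    split_ifs <;> norm_num

lemma conv_pow {p k : ℕ} (hp : p.Prime) (hk : k ≠ 0) :
    (Uaf * Maf) (p ^ k) = if k = 1 then c p - 1 else 0 := by
  rw [mul_apply, Nat.sum_divisorsAntidiagonal (fun a b => Uaf a * Maf b),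
    Nat.sum_divisors_prime_pow hp]
  have hterm : ∀ i ≤ k, Uaf (p ^ i) * Maf (p ^ k / p ^ i)
      = (if i = 0 then 1 else c p) * (if k - i = 0 then 1 else if k - i = 1 then -1 else 0) := by
    intro i hi
    rw [Nat.pow_div hi hp.pos, Uaf_pow hp, Maf_pow hp]
  rcases Nat.lt_or_ge k 2 with hk2 | hk2
  · interval_cases k
    · omega
    · rw [Finset.sum_range_succ, Finset.sum_range_one, hterm 0 (by norm_num),
        hterm 1 (by norm_num)]
      norm_num
      ring
  · obtain ⟨m, rfl⟩ : ∃ m, k = m + 2 := ⟨k - 2, by omega⟩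
    rw [if_neg (by omega)]
    rw [show m + 2 + 1 = (m + 1) + 1 + 1 from rfl, Finset.sum_range_succ,
      Finset.sum_range_succ]
    have h0 : ∑ i ∈ Finset.range (m + 1), Uaf (p ^ i) * Maf (p ^ (m + 2) / p ^ i) = 0 := by
      refine Finset.sum_eq_zero fun i hi => ?_
      rw [Finset.mem_range] at hi
      rw [hterm i (by omega)]
      have h1 : m + 2 - i ≠ 0 := by omega
      have h2 : m + 2 - i ≠ 1 := by omega
      rw [if_neg h1, if_neg h2, mul_zero]
    rw [h0, hterm (m + 1) (by omega), hterm (m + 2) (by omega)]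
    simp [show m + 2 - (m + 1) = 1 from by omega]

lemma c_sub_one {p : ℕ} (hp : p.Prime) :
    c p - 1 = ((p : ℝ) ^ 2)⁻¹ * (1 - 2 / (p : ℝ) ^ 2)⁻¹ := by
  have hp0 : ((p : ℝ)) ≠ 0 := by exact_mod_cast hp.pos.ne'
  have h2 : (1 - 2 / (p : ℝ) ^ 2) ≠ 0 := (factor_pos hp).ne'
  rw [c, div_sub_one h2,
    show (1 - 1 / (p : ℝ) ^ 2) - (1 - 2 / (p : ℝ) ^ 2) = ((p : ℝ) ^ 2)⁻¹ from by ring,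
    div_eq_mul_inv]

lemma conv_value {n : ℕ} (hn : 2 ≤ n) :
    UpsilonStarMu n = if Squarefree n then
      ((n : ℝ) ^ 2)⁻¹ * ∏ p ∈ n.primeFactors, (1 - 2 / (p : ℝ) ^ 2)⁻¹ else 0 := by
  have hn0 : n ≠ 0 := by omega
  rw [conv_eq hn0, conv_mult.multiplicative_factorization _ hn0, Finsupp.prod,
    Nat.support_factorization]
  split_ifs with hsq
  · have hfact : ∀ p ∈ n.primeFactors, n.factorization p = 1 := fun p hp => by
      have h1 : n.factorization p ≤ 1 :=
        (Nat.squarefree_iff_factorization_le_one hn0).mp hsq p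
      have h2 : 1 ≤ n.factorization p :=
        (Nat.Prime.factorization_pos_of_dvd (Nat.prime_of_mem_primeFactors hp) hn0
          (Nat.dvd_of_mem_primeFactors hp))
      omega
    calc ∏ p ∈ n.primeFactors, (Uaf * Maf) (p ^ n.factorization p)
        = ∏ p ∈ n.primeFactors, (((p : ℝ) ^ 2)⁻¹ * (1 - 2 / (p : ℝ) ^ 2)⁻¹) := by
          refine Finset.prod_congr rfl fun p hp => ?_
          have hpp := Nat.prime_of_mem_primeFactors hp
          rw [hfact p hp, conv_pow hpp one_ne_zero, if_pos rfl, c_sub_one hpp]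
      _ = (∏ p ∈ n.primeFactors, ((p : ℝ) ^ 2)⁻¹)
            * ∏ p ∈ n.primeFactors, (1 - 2 / (p : ℝ) ^ 2)⁻¹ := Finset.prod_mul_distrib
      _ = ((n : ℝ) ^ 2)⁻¹ * ∏ p ∈ n.primeFactors, (1 - 2 / (p : ℝ) ^ 2)⁻¹ := by
          congr 1
          rw [Finset.prod_inv_distrib]
          congr 1
          rw [Finset.prod_pow, ← Nat.cast_prod, Nat.prod_primeFactors_of_squarefree hsq]
  · obtain ⟨p, hp2⟩ : ∃ p, 2 ≤ n.factorization p := by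
      by_contra h
      push_neg at h
      exact hsq ((Nat.squarefree_iff_factorization_le_one hn0).mpr fun p => by
        have := h p; omega)
    have hpmem : p ∈ n.primeFactors := by
      rw [← Nat.support_factorization, Finsupp.mem_support_iff]
      omega
    refine Finset.prod_eq_zero hpmem ?_
    rw [conv_pow (Nat.prime_of_mem_primeFactors hpmem) (by omega), if_neg (by omega)]

end UpsilonAux

open UpsilonAux in
/-- **Bounds for the convolution `Υ ⋆ μ`**: for every `n ≥ 2`,
`|μ(n)|/n² ≤ (Υ ⋆ μ)(n) ≤ (1/F) · |μ(n)|/n²`. -/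
theorem upsilonStarMu_bounds (n : ℕ) (hn : 2 ≤ n) :
    |(moebius n : ℝ)| / (n : ℝ) ^ 2 ≤ UpsilonStarMu n ∧
      UpsilonStarMu n ≤ (1 / fellerTornier) * (|(moebius n : ℝ)| / (n : ℝ) ^ 2) := by
  have hn0 : n ≠ 0 := by omega
  rw [conv_value hn]
  by_cases hsq : Squarefree n
  · rw [if_pos hsq]
    have habs : |(moebius n : ℝ)| = 1 := by
      rw [moebius_apply_of_squarefree hsq]
      push_cast
      rw [abs_pow, abs_neg, abs_one, one_pow]
    rw [habs]
    have hnpos : (0:ℝ) < (n : ℝ) ^ 2 := by positivity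
    set P : ℝ := ∏ p ∈ n.primeFactors, (1 - 2 / (p : ℝ) ^ 2)⁻¹ with hP
    have hprimes : ∀ p ∈ n.primeFactors, p.Prime := fun p hp =>
      Nat.prime_of_mem_primeFactors hp
    have hPone : 1 ≤ P := by
      calc (1:ℝ) = ∏ _p ∈ n.primeFactors, 1 := (Finset.prod_const_one).symm
        _ ≤ P := by
            refine Finset.prod_le_prod (fun p _ => by norm_num) fun p hp => ?_
            have hpp := hprimes p hp
            have hx := factor_pos hpp
            have hle := factor_le_one hpp
            have hinv : 0 < (1 - 2 / (p : ℝ) ^ 2)⁻¹ := by positivity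
            nlinarith [mul_inv_cancel₀ hx.ne']
    have hFle : fellerTornier ≤ ∏ p ∈ n.primeFactors, (1 - 2 / (p : ℝ) ^ 2) :=
      fellerTornier_le_prod _ hprimes
    have hPle : P ≤ 1 / fellerTornier := by
      rw [hP, Finset.prod_inv_distrib, one_div]
      exact inv_anti₀ fellerTornier_pos hFle
    constructor
    · rw [div_le_iff₀ hnpos]
      calc (1:ℝ) ≤ P := hPone
        _ = ((n : ℝ) ^ 2)⁻¹ * P * (n : ℝ) ^ 2 := by field_simp
    · rw [mul_comm (1 / fellerTornier), div_mul_eq_mul_div, one_mul, le_div_iff₀ hnpos]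
      calc ((n : ℝ) ^ 2)⁻¹ * P * (n : ℝ) ^ 2 = P := by field_simp
        _ ≤ 1 / fellerTornier := hPle
  · rw [if_neg hsq, moebius_eq_zero_of_not_squarefree hsq]
    norm_num
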